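/- For the root system G_2, ample polytopes for the toric variety of the Weyl fan are not diagonally split for any integer q ≥ 2: with p = ⌊q/2⌋, α_1 the short and α_2 the long simple root, the class of z = (p/q)α_2 in (1/q)Y / Y has no representative z̃ ∈ (1/q)Y satisfying |⟨w z̃, ω_i⟩| < 1 for all Weyl group elements w and both fundamental coweights ω_i. -/

import Mathlib

open scoped BigOperators

/-- The simple reflection `s_i` acting on root coordinates, where `C k i = ⟨α_k, α_i^∨⟩`. -/
def qRefl {n : ℕ} (C : Matrix (Fin n) (Fin n) ℤ) (i : Fin n) (v : Fin n → ℚ) :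
    Fin n → ℚ :=
  fun j => if j = i then v i - ∑ k, (C k i : ℚ) * v k else v j

/-- The action on root coordinates of the Weyl group element given by the word `l`. -/
def weylAct {n : ℕ} (C : Matrix (Fin n) (Fin n) ℤ) (l : List (Fin n)) (v : Fin n → ℚ) :
    Fin n → ℚ :=
  l.foldl (fun u i => qRefl C i u) v

/-- The Cartan matrix of `G₂`, with index `0` the short simple root `α₁` and index `1` the
long simple root `α₂`: `C k i = ⟨α_k, α_i^∨⟩`, so `C 0 1 = -1` and `C 1 0 = -3`. -/
def cartanG2 : Matrix (Fin 2) (Fin 2) ℤ := !![2, -1; -3, 2]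

/-- For the root system `G₂` and any `q ≥ 2`, ample polytopes for the
Weyl-fan toric variety are not diagonally split: with `p = ⌊q/2⌋`, the class of
`z = (p/q) α₂` in `(1/q)Y / Y` has no representative `z̃ ∈ (1/q)Y` with
`|⟨w z̃, ωᵢ⟩| < 1` for all Weyl group elements `w` and both fundamental coweights. -/
theorem stmt16 (q : ℤ) (hq : 2 ≤ q) :
    ¬ ∃ zt : Fin 2 → ℚ,
      (∀ i, ∃ n : ℤ, (q : ℚ) * zt i = n) ∧
      (∀ i, ∃ n : ℤ,
        zt i - (if i = 1 then ((q / 2 : ℤ) : ℚ) / (q : ℚ) else 0) = n) ∧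
      ∀ (l : List (Fin 2)) (i : Fin 2), |weylAct cartanG2 l zt i| < 1 := by
  rintro ⟨zt, -, hrep, hbound⟩
  have hq0 : (0:ℚ) < (q:ℚ) := by exact_mod_cast lt_of_lt_of_le (by norm_num) hq
  -- zt 0 is an integer with |zt 0| < 1, hence zt 0 = 0
  obtain ⟨a, ha⟩ := hrep 0
  simp only [if_neg (by decide : (0 : Fin 2) ≠ 1), sub_zero] at ha
  have h0 : |zt 0| < 1 := by simpa [weylAct] using hbound [] 0
  have ha0 : zt 0 = 0 := by
    rw [ha] at h0 ⊢
    by_contra h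
    have : a ≠ 0 := by exact_mod_cast h
    have : (1:ℚ) ≤ |(a:ℚ)| := by exact_mod_cast Int.one_le_abs this
    linarith [h0]
  -- |3 * zt 1| < 1
  have h3 : |3 * zt 1| < 1 := by
    have := hbound [0] 0
    simp only [weylAct, qRefl, List.foldl, cartanG2, Fin.sum_univ_two] at this
    norm_num [Matrix.cons_val_zero, Matrix.cons_val_one, Matrix.head_cons, ha0] at this
    convert this using 2
    rw [abs_mul, abs_of_pos (by norm_num : (0:ℚ) < 3)]
  have habs := abs_lt.mp h3
  -- z t 1 = c + m with 1/3 ≤ c ≤ 1/2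
  obtain ⟨m, hm⟩ := hrep 1
  norm_num at hm
  set c : ℚ := ((q / 2 : ℤ) : ℚ) / (q : ℚ) with hc
  have hdq : q ≤ 3 * (q / 2) ∧ 2 * (q / 2) ≤ q := by omega
  have hc1 : (1:ℚ)/3 ≤ c := by
    rw [hc, div_le_div_iff₀ (by norm_num) hq0]
    have : (q:ℚ) ≤ 3 * ((q/2 : ℤ):ℚ) := by exact_mod_cast hdq.1
    linarith
  have hc2 : c ≤ 1/2 := by
    rw [hc, div_le_div_iff₀ hq0 (by norm_num)]
    have : 2 * ((q/2 : ℤ):ℚ) ≤ (q:ℚ) := by exact_mod_cast hdq.2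
    linarith
  have hz1 : zt 1 = c + m := by linarith [hm]
  rcases le_or_gt 0 m with hm0 | hm0
  · have : (0:ℚ) ≤ (m:ℚ) := by exact_mod_cast hm0
    linarith [habs.2]
  · have hm1 : m ≤ -1 := by omega
    have : (m:ℚ) ≤ -1 := by exact_mod_cast hm1
    linarith [habs.1]
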